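/- Abstract sequence version of logarithmic interpolation: let (a_k)_{k∈ℤ} be a nonnegative sequence, let 0 < ε ≤ 1, and set A = sup_k a_k, B = sup_k 2^{−εk} a_k + sup_k 2^{εk} a_k. If 0 < A < ∞ and B < ∞, then Σ_{k∈ℤ} a_k ≤ C (A/ε) log(e + B/A) for an absolute constant C. -/

import Mathlib

open Set

private lemma log_interp_aux_flip {x D v : ℝ} (hx : (2:ℝ) ^ x * v ≤ D) :
    v ≤ D * (2:ℝ) ^ (-x) := by
  have hq : (0:ℝ) < (2:ℝ) ^ (-x) := Real.rpow_pos_of_pos two_pos _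
  have h := mul_le_mul_of_nonneg_left hx hq.le
  rw [← mul_assoc, ← Real.rpow_add two_pos, neg_add_cancel, Real.rpow_zero, one_mul,
    mul_comm] at h
  exact h

set_option maxHeartbeats 1000000 in
/-- **Abstract sequence version of logarithmic interpolation.** There is an absolute
constant `C > 0` such that for every nonnegative sequence `(a_k)_{k ∈ ℤ}` and `0 < ε ≤ 1`,
with `A = sup_k a_k` and `B = sup_k 2^{-εk} a_k + sup_k 2^{εk} a_k` finite and `A > 0`,
one has `∑_k a_k ≤ C (A/ε) log (e + B/A)`. -/
theorem log_interpolation_sequence :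
    ∃ C : ℝ, 0 < C ∧ ∀ (a : ℤ → ℝ) (ε : ℝ), 0 < ε → ε ≤ 1 →
      (∀ k, 0 ≤ a k) →
      BddAbove (Set.range a) →
      BddAbove (Set.range fun k : ℤ => (2:ℝ) ^ (-(ε * (k:ℝ))) * a k) →
      BddAbove (Set.range fun k : ℤ => (2:ℝ) ^ (ε * (k:ℝ)) * a k) →
      0 < (⨆ k : ℤ, a k) →
      Summable a ∧
        ∑' k : ℤ, a k ≤ C * ((⨆ k : ℤ, a k) / ε) *
          Real.log (Real.exp 1 +
            ((⨆ k : ℤ, (2:ℝ) ^ (-(ε * (k:ℝ))) * a k) +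
              (⨆ k : ℤ, (2:ℝ) ^ (ε * (k:ℝ)) * a k)) / (⨆ k : ℤ, a k)) := by
  refine ⟨100, by norm_num, ?_⟩
  intro a ε hε0 hε1 ha hbA hbB1 hbB2 hApos
  set A := ⨆ k : ℤ, a k with hAdef
  set B₁ := ⨆ k : ℤ, (2:ℝ) ^ (-(ε * (k:ℝ))) * a k with hB1def
  set B₂ := ⨆ k : ℤ, (2:ℝ) ^ (ε * (k:ℝ)) * a k with hB2def
  have hA0 : 0 < A := hApos
  have haA : ∀ k : ℤ, a k ≤ A := fun k => le_ciSup hbA k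
  have hB1k : ∀ k : ℤ, (2:ℝ) ^ (-(ε * (k:ℝ))) * a k ≤ B₁ := fun k => le_ciSup hbB1 k
  have hB2k : ∀ k : ℤ, (2:ℝ) ^ (ε * (k:ℝ)) * a k ≤ B₂ := fun k => le_ciSup hbB2 k
  clear_value A B₁ B₂
  set r := (2:ℝ) ^ (-ε) with hrdef
  have hr0 : 0 < r := Real.rpow_pos_of_pos two_pos _
  have hr1 : r < 1 := Real.rpow_lt_one_of_one_lt_of_neg one_lt_two (by linarith)
  have hrpow : ∀ n : ℕ, r ^ n = (2:ℝ) ^ (-(ε * (n:ℝ))) := by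
    intro n
    rw [hrdef, ← Real.rpow_natCast ((2:ℝ) ^ (-ε)) n, ← Real.rpow_mul (by norm_num), neg_mul]
  clear_value r
  -- pointwise geometric bounds
  have hbound_pos : ∀ n : ℕ, a n ≤ B₂ * r ^ n := by
    intro n
    have h := log_interp_aux_flip (hB2k (n : ℤ))
    have hc : (((n:ℤ)):ℝ) = (n:ℝ) := by push_cast; ring
    rw [hc] at h
    rw [hrpow n]
    exact h
  have hbound_neg : ∀ n : ℕ, a (-((n:ℤ) + 1)) ≤ B₁ * r ^ (n + 1) := by
    intro n
    have h := log_interp_aux_flip (hB1k (-((n:ℤ) + 1)))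
    have hc : (-(-(ε * (((-((n:ℤ) + 1)):ℤ):ℝ)))) = -(ε * (((n+1:ℕ)):ℝ)) := by
      push_cast; ring
    rw [hc, ← hrpow (n + 1)] at h
    exact h
  -- summability
  have hsum_geo : Summable (fun n : ℕ => r ^ n) := summable_geometric_of_lt_one hr0.le hr1
  have hsp : Summable (fun n : ℕ => a n) :=
    Summable.of_nonneg_of_le (fun n => ha n) hbound_pos (hsum_geo.mul_left B₂)
  have hsgn : Summable (fun n : ℕ => B₁ * r ^ (n + 1)) :=
    (summable_nat_add_iff 1).mpr (hsum_geo.mul_left B₁)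
  have hsn : Summable (fun n : ℕ => a (-((n:ℤ) + 1))) :=
    Summable.of_nonneg_of_le (fun n => ha _) hbound_neg hsgn
  have hsumZ : Summable a := Summable.of_nat_of_neg_add_one hsp hsn
  refine ⟨hsumZ, ?_⟩
  rw [tsum_of_nat_of_neg_add_one hsp hsn]
  -- B ≥ 2A
  have hBA : A ≤ (B₁ + B₂) / 2 := by
    rw [hAdef]
    apply ciSup_le
    intro k
    set x := (2:ℝ) ^ (ε * (k:ℝ)) with hxdef
    have hx : 0 < x := Real.rpow_pos_of_pos two_pos _
    have hxinv : (2:ℝ) ^ (-(ε * (k:ℝ))) = x⁻¹ := by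
      rw [hxdef, ← Real.rpow_neg (by norm_num : (0:ℝ) ≤ 2)]
    have h1 := hB1k k
    rw [hxinv] at h1
    have h2 := hB2k k
    have h3 : 0 ≤ a k * x⁻¹ * (x - 1) ^ 2 := mul_nonneg (mul_nonneg (ha k) (inv_pos.mpr hx).le) (sq_nonneg _)
    have h4 : a k * x⁻¹ * (x - 1) ^ 2 = x * a k + x⁻¹ * a k - 2 * a k := by
      field_simp
      ring
    linarith
  set Bt := B₁ + B₂ with hBtdef
  clear_value Bt
  have hBt0 : 0 < Bt := by linarith
  set L := Real.log (Bt / A) with hLdef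
  set M := Real.log (Real.exp 1 + Bt / A) with hMdef
  have hBtA : 0 < Bt / A := div_pos hBt0 hA0
  have hBA2 : (2:ℝ) ≤ Bt / A := (le_div_iff₀ hA0).mpr (by linarith)
  have hL0 : 0 ≤ L := Real.log_nonneg (by linarith)
  have hLM : L ≤ M := Real.log_le_log hBtA (by linarith [Real.exp_pos 1])
  have hM1 : 1 ≤ M := by
    have h := Real.log_le_log (Real.exp_pos 1) (by linarith : Real.exp 1 ≤ Real.exp 1 + Bt / A)
    rwa [Real.log_exp] at h
  have hexpL : Real.exp (-L) = A / Bt := by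
    rw [hLdef, ← Real.log_inv, Real.exp_log (by positivity), inv_div]
  clear_value L M
  set D := ε * Real.log 2 with hDdef
  have hlog2 : 0 < Real.log 2 := Real.log_pos one_lt_two
  have hD0 : 0 < D := mul_pos hε0 hlog2
  clear_value D
  set N := ⌈L / D⌉₊ with hNdef
  have hN1 : L ≤ D * N := by
    have h := Nat.le_ceil (L / D)
    rw [div_le_iff₀ hD0] at h
    rw [hNdef]
    linarith
  have hN2 : (N:ℝ) ≤ L / D + 1 := by
    have h := Nat.ceil_lt_add_one (div_nonneg hL0 hD0.le)
    rw [hNdef]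
    linarith
  clear_value N
  -- r^N ≤ A / Bt
  have hrN : r ^ N ≤ A / Bt := by
    rw [hrpow N, Real.rpow_def_of_pos two_pos, ← hexpL]
    apply Real.exp_le_exp.mpr
    have he : Real.log 2 * (-(ε * (N:ℝ))) = -(D * N) := by rw [hDdef]; ring
    rw [he]
    linarith
  -- r / (1-r) ≤ 1 / D
  have hrr : r / (1 - r) ≤ 1 / D := by
    rw [div_le_div_iff₀ (by linarith) hD0]
    have h2e : 1 + D ≤ (2:ℝ) ^ ε := by
      rw [Real.rpow_def_of_pos two_pos, hDdef, mul_comm]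
      linarith [Real.add_one_le_exp (Real.log 2 * ε)]
    have hre : r * (2:ℝ) ^ ε = 1 := by
      rw [hrdef, ← Real.rpow_add two_pos]
      norm_num
    have h3 : r * (1 + D) ≤ r * (2:ℝ) ^ ε := mul_le_mul_of_nonneg_left h2e hr0.le
    rw [hre] at h3
    nlinarith
  -- bound the positive-index sum
  have hpos_bound : ∑' n : ℕ, a n ≤ ((N:ℝ) + 1) * A + B₂ * (r ^ (N + 1) * (1 - r)⁻¹) := by
    rw [← Summable.sum_add_tsum_nat_add (N + 1) hsp]
    have h1 : ∑ i ∈ Finset.range (N + 1), a i ≤ ((N:ℝ) + 1) * A := by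
      calc ∑ i ∈ Finset.range (N + 1), a i ≤ ∑ _i ∈ Finset.range (N + 1), A :=
            Finset.sum_le_sum (fun i _ => haA i)
        _ = ((N:ℝ) + 1) * A := by
            rw [Finset.sum_const, Finset.card_range, nsmul_eq_mul]
            push_cast; ring
    have h2 : ∑' n : ℕ, a (↑(n + (N + 1))) ≤ B₂ * (r ^ (N + 1) * (1 - r)⁻¹) := by
      calc ∑' n : ℕ, a (↑(n + (N + 1)))
          ≤ ∑' n : ℕ, B₂ * r ^ (n + (N + 1)) := by
            have s1 : Summable (fun n : ℕ => a (↑(n + (N + 1)))) :=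
              (summable_nat_add_iff (N + 1)).mpr hsp
            have s2 : Summable (fun n : ℕ => B₂ * r ^ (n + (N + 1))) :=
              (summable_nat_add_iff (f := fun n : ℕ => B₂ * r ^ n) (N + 1)).mpr
                (hsum_geo.mul_left B₂)
            exact Summable.tsum_le_tsum (fun n => hbound_pos (n + (N + 1))) s1 s2
        _ = B₂ * (r ^ (N + 1) * (1 - r)⁻¹) := by
            have hc : ∀ n : ℕ, B₂ * r ^ (n + (N + 1)) = (B₂ * r ^ (N + 1)) * r ^ n := by
              intro n; rw [pow_add]; ring
            rw [tsum_congr hc, tsum_mul_left, tsum_geometric_of_lt_one hr0.le hr1, mul_assoc]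
    linarith
  -- bound the negative-index sum
  have hneg_bound : ∑' n : ℕ, a (-((n:ℤ) + 1)) ≤ (N:ℝ) * A + B₁ * (r ^ (N + 1) * (1 - r)⁻¹) := by
    rw [← Summable.sum_add_tsum_nat_add N hsn]
    have h1 : ∑ i ∈ Finset.range N, a (-((i:ℤ) + 1)) ≤ (N:ℝ) * A := by
      calc ∑ i ∈ Finset.range N, a (-((i:ℤ) + 1)) ≤ ∑ _i ∈ Finset.range N, A :=
            Finset.sum_le_sum (fun i _ => haA _)
        _ = (N:ℝ) * A := by rw [Finset.sum_const, Finset.card_range, nsmul_eq_mul]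
    have h2 : ∑' n : ℕ, a (-(((n + N : ℕ):ℤ) + 1)) ≤ B₁ * (r ^ (N + 1) * (1 - r)⁻¹) := by
      calc ∑' n : ℕ, a (-(((n + N : ℕ):ℤ) + 1))
          ≤ ∑' n : ℕ, B₁ * r ^ (n + N + 1) := by
            have s1 : Summable (fun n : ℕ => a (-(((n + N : ℕ):ℤ) + 1))) :=
              (summable_nat_add_iff N).mpr hsn
            have s2 : Summable (fun n : ℕ => B₁ * r ^ (n + N + 1)) :=
              (summable_nat_add_iff (f := fun n : ℕ => B₁ * r ^ (n + 1)) N).mpr hsgn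
            exact Summable.tsum_le_tsum (fun n => hbound_neg (n + N)) s1 s2
        _ = B₁ * (r ^ (N + 1) * (1 - r)⁻¹) := by
            have hc : ∀ n : ℕ, B₁ * r ^ (n + N + 1) = (B₁ * r ^ (N + 1)) * r ^ n := by
              intro n
              rw [show n + N + 1 = n + (N + 1) from by ring, pow_add]
              ring
            rw [tsum_congr hc, tsum_mul_left, tsum_geometric_of_lt_one hr0.le hr1, mul_assoc]
    linarith
  -- tail bound
  have htail2 : Bt * (r ^ (N + 1) * (1 - r)⁻¹) ≤ A / D := by
    have e1 : r ^ (N + 1) * (1 - r)⁻¹ = r ^ N * (r / (1 - r)) := by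
      rw [pow_succ]; field_simp
    rw [e1]
    have h4 : r ^ N * (r / (1 - r)) ≤ (A / Bt) * (1 / D) :=
      mul_le_mul hrN hrr (div_nonneg hr0.le (by linarith)) (div_nonneg hA0.le hBt0.le)
    calc Bt * (r ^ N * (r / (1 - r))) ≤ Bt * ((A / Bt) * (1 / D)) :=
          mul_le_mul_of_nonneg_left h4 hBt0.le
      _ = A / D := by field_simp
  -- final numeric bound
  have hN3 : (N:ℝ) ≤ M / D + 1 := by
    have h : L / D ≤ M / D := (div_le_div_iff_of_pos_right hD0).mpr hLM
    linarith
  have hfinal : (2 * (N:ℝ) + 1) * A + A / D ≤ 100 * (A / ε) * M := by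
    rw [← mul_le_mul_iff_of_pos_right hD0]
    have eL : ((2 * (N:ℝ) + 1) * A + A / D) * D = (2 * (N:ℝ) + 1) * A * D + A := by
      field_simp
    have eR : 100 * (A / ε) * M * D = 100 * A * M * Real.log 2 := by
      rw [hDdef]; field_simp
    rw [eL, eR]
    have hND : (N:ℝ) * D ≤ M + D := by
      have h := mul_le_mul_of_nonneg_right hN3 hD0.le
      rwa [add_mul, one_mul, div_mul_cancel₀ _ hD0.ne'] at h
    have hl1 : Real.log 2 ≤ 1 := by linarith [Real.log_two_lt_d9]
    have hl2 : (1:ℝ) / 2 ≤ Real.log 2 := by linarith [Real.log_two_gt_d9]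
    have hD1 : D ≤ 1 := by
      rw [hDdef]
      calc ε * Real.log 2 ≤ 1 * 1 := mul_le_mul hε1 hl1 hlog2.le one_pos.le
        _ = 1 := by norm_num
    nlinarith [mul_le_mul_of_nonneg_left hND hA0.le, mul_le_mul_of_nonneg_left hD1 hA0.le,
      mul_le_mul_of_nonneg_left hM1 hA0.le,
      mul_nonneg (mul_nonneg hA0.le (by linarith : (0:ℝ) ≤ M)) (by linarith : (0:ℝ) ≤ Real.log 2 - 1/2)]
  have htot : ∑' (n : ℕ), a (↑n) + ∑' (n : ℕ), a (-((n:ℤ) + 1)) ≤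
      (2 * (N:ℝ) + 1) * A + Bt * (r ^ (N + 1) * (1 - r)⁻¹) := by
    calc ∑' (n : ℕ), a (↑n) + ∑' (n : ℕ), a (-((n:ℤ) + 1)) ≤
        ((N:ℝ) + 1) * A + B₂ * (r ^ (N + 1) * (1 - r)⁻¹) +
          ((N:ℝ) * A + B₁ * (r ^ (N + 1) * (1 - r)⁻¹)) := add_le_add hpos_bound hneg_bound
      _ = (2 * (N:ℝ) + 1) * A + Bt * (r ^ (N + 1) * (1 - r)⁻¹) := by rw [hBtdef]; ring
  linarith [htot, htail2, hfinal]
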